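/- Pointwise factorization in Fourier variables: for every ξ ∈ ℝ³ and every n ∈ S², setting ξ⁺ = ξ − 2κ(ξ·n)n and ξ⁻ = 2κ(ξ·n)n, one has M̂(ξ⁺) · M̂₁(ξ⁻) = M̂(ξ), where M̂(ξ) = exp(−i u₁·ξ − Θ#|ξ|²/(2m)) and M̂₁(ξ) = exp(−i u₁·ξ − Θ₁|ξ|²/(2m₁)) are the Fourier transforms of the Maxwellians M and M₁ respectively (complex-valued identity). -/

import Mathlib

open MeasureTheory Metric Real
open scoped RealInnerProductSpace

noncomputable section

/-- `ℝ³` as a Euclidean space. -/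
abbrev E3 := EuclideanSpace ℝ (Fin 3)

/-- The unit sphere `S² ⊂ ℝ³`. -/
abbrev Sph := Metric.sphere (0 : E3) 1

/-- The Fourier transform of the Maxwellian with mass `mm`, temperature `Θ` and bulk
velocity `u`: `ξ ↦ exp(-i u·ξ - Θ|ξ|²/(2 mm))`. -/
noncomputable def maxwellianFT (mm Θ : ℝ) (u : E3) (ξ : E3) : ℂ :=
  Complex.exp (-(Complex.I * ((⟪u, ξ⟫ : ℝ) : ℂ)) - ((Θ * ‖ξ‖ ^ 2 / (2 * mm) : ℝ) : ℂ))

/-- Pointwise factorization in Fourier variables: for every `ξ ∈ ℝ³` and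
`n ∈ S²`, with `ξ⁺ = ξ - 2κ(ξ·n)n` and `ξ⁻ = 2κ(ξ·n)n`, one has
`M̂(ξ⁺) M̂₁(ξ⁻) = M̂(ξ)`. -/
theorem maxwellianFT_factorization
    (m m1 e Θ1 : ℝ) (u1 : E3)
    (hm : 0 < m) (hm1 : 0 < m1) (he : e ∈ Set.Ioo (0 : ℝ) 1) (hΘ1 : 0 < Θ1)
    (α β κ Θs : ℝ)
    (hα : α = m1 / (m + m1)) (hβ : β = (1 - e) / 2) (hκ : κ = α * (1 - β))
    (hΘs : Θs = (1 - α) * (1 - β) * Θ1 / (1 - α * (1 - β)))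
    (ξ : E3) (n : Sph) :
    maxwellianFT m Θs u1 (ξ - (2 * κ * ⟪ξ, (n : E3)⟫) • (n : E3)) *
        maxwellianFT m1 Θ1 u1 ((2 * κ * ⟪ξ, (n : E3)⟫) • (n : E3)) =
      maxwellianFT m Θs u1 ξ := by

  obtain ⟨he0, he1⟩ := he
  have hn : ‖(n : E3)‖ = 1 := by simpa using mem_sphere_zero_iff_norm.mp n.2
  set t : ℝ := ⟪ξ, (n : E3)⟫ with ht
  set c : ℝ := 2 * κ * t with hc
  -- parameter facts
  have hmm1 : (0:ℝ) < m + m1 := by linarith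
  have hα0 : 0 < α := by rw [hα]; positivity
  have hα1 : α < 1 := by rw [hα]; rw [div_lt_one hmm1]; linarith
  have hβ0 : 0 < 1 - β := by rw [hβ]; linarith
  have hβ1 : 1 - β < 1 := by rw [hβ]; linarith
  have hκ1 : κ < 1 := by rw [hκ]; nlinarith
  have h1κ : 1 - κ ≠ 0 := by intro h; linarith [h]
  have hαval : α * (m + m1) = m1 := by rw [hα]; field_simp
  have hrel : Θs * (1 - κ) * m1 = κ * Θ1 * m := by
    rw [hΘs, ← hκ]
    field_simp
    rw [hκ]
    linear_combination (-(1 - β)) * hαval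
  -- geometric facts
  have hinner : ⟪u1, ξ - c • (n : E3)⟫ + ⟪u1, c • (n : E3)⟫ = ⟪u1, ξ⟫ := by
    rw [inner_sub_right]; ring
  have hnorm1 : ‖ξ - c • (n : E3)‖ ^ 2 = ‖ξ‖ ^ 2 - 2 * c * t + c ^ 2 := by
    rw [@norm_sub_sq_real, real_inner_smul_right, norm_smul, hn, mul_one, ← ht]
    rw [Real.norm_eq_abs, sq_abs]
    ring
  have hnorm2 : ‖c • (n : E3)‖ ^ 2 = c ^ 2 := by
    rw [norm_smul, hn, mul_one, Real.norm_eq_abs, sq_abs]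
  have key : Θs * ‖ξ - c • (n : E3)‖ ^ 2 / (2 * m) + Θ1 * ‖c • (n : E3)‖ ^ 2 / (2 * m1)
      = Θs * ‖ξ‖ ^ 2 / (2 * m) := by
    rw [hnorm1, hnorm2, hc]
    field_simp
    linear_combination (-4 * κ * t ^ 2) * hrel
  have hAc : ((⟪u1, ξ - c • (n : E3)⟫ : ℝ) : ℂ) + ((⟪u1, c • (n : E3)⟫ : ℝ) : ℂ)
      = ((⟪u1, ξ⟫ : ℝ) : ℂ) := by exact_mod_cast hinner
  have hBc : ((Θs * ‖ξ - c • (n : E3)‖ ^ 2 / (2 * m) : ℝ) : ℂ)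
      + ((Θ1 * ‖c • (n : E3)‖ ^ 2 / (2 * m1) : ℝ) : ℂ)
      = ((Θs * ‖ξ‖ ^ 2 / (2 * m) : ℝ) : ℂ) := by exact_mod_cast key
  unfold maxwellianFT
  rw [← Complex.exp_add]
  congr 1
  linear_combination (-Complex.I) * hAc - hBc
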